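/- Let V be a locally finite game graph and k ≥ 1. (a) If V, R(V), …, R^{(k)}(V) are all draw-free, then R^{(k+1)}(V) = R(R^{(k)}(V)), where R is applied to R^{(k)}(V) regarded as a game graph in its own right. (b) V is k-stable if and only if V, R(V), …, R^{(k)}(V) are all draw-free. -/
import Mathlib


open scoped Classical

universe u

/-- `PosP Γ n` is the set `Pₙ` of positions from which the second player can win
within `n` rounds: `P₀` is the set of terminal positions, and
`Pₙ₊₁ = {x : every option of x has an option in Pₙ}`. -/
def PosP {V : Type*} (Γ : V → Finset V) : ℕ → Set V
  | 0 => {x | Γ x = ∅}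
  | n + 1 => {x | ∀ y ∈ Γ x, ∃ z ∈ Γ y, z ∈ PosP Γ n}

/-- `PosN Γ n` is the set `Nₙ`: for `n ≥ 1`, `Nₙ = {x : some option of x lies in Pₙ₋₁}`. -/
def PosN {V : Type*} (Γ : V → Finset V) : ℕ → Set V
  | 0 => ∅
  | n + 1 => {x | ∃ y ∈ Γ x, y ∈ PosP Γ n}

/-- The P-positions `𝒫 = ⋃ₙ Pₙ` (second player wins). -/
def PPos {V : Type*} (Γ : V → Finset V) : Set V := ⋃ n, PosP Γ n

/-- The N-positions `𝒩 = ⋃ₙ Nₙ` (first player wins). -/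
def NPos {V : Type*} (Γ : V → Finset V) : Set V := ⋃ n, PosN Γ n

/-- The D-positions `𝒟 = V ∖ (𝒫 ∪ 𝒩)` (draws). -/
def DPos {V : Type*} (Γ : V → Finset V) : Set V := (PPos Γ ∪ NPos Γ)ᶜ

/-- The mex (least natural number not attained) of the values `g y`, `y ∈ s`. -/
noncomputable def mexF {V : Type*} (s : Finset V) (g : V → ℕ∞) : ℕ :=
  sInf {n : ℕ | ∀ y ∈ s, g y ≠ (n : ℕ∞)}

/-- The approximants `𝒢ₙ` of the extended Sprague-Grundy function. -/
noncomputable def Gfun {V : Type*} (Γ : V → Finset V) : ℕ → V → ℕ∞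
  | 0 => fun x => if Γ x = ∅ then 0 else ⊤
  | n + 1 => fun x =>
      let m := mexF (Γ x) (Gfun Γ n)
      if ∀ y ∈ Γ x, Gfun Γ n y ≤ (m : ℕ∞) ∨ ∃ z ∈ Γ y, Gfun Γ n z = (m : ℕ∞)
      then (m : ℕ∞) else ⊤

/-- `x` has finite rank with (finite) Sprague-Grundy value `m`:
`𝒢ₙ(x) = m` for all sufficiently large `n`. -/
def HasGVal {V : Type*} (Γ : V → Finset V) (x : V) (m : ℕ) : Prop :=
  ∃ n₀ : ℕ, ∀ n ≥ n₀, Gfun Γ n x = (m : ℕ∞)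

/-- `x` has infinite rank: `𝒢ₙ(x) = ∞` for all `n`. -/
def InfiniteRank {V : Type*} (Γ : V → Finset V) (x : V) : Prop :=
  ∀ n : ℕ, Gfun Γ n x = ⊤

/-- The rank of `x`: the least `n` with `𝒢ₙ(x) < ∞`, or `∞` if there is none. -/
noncomputable def rank {V : Type*} (Γ : V → Finset V) (x : V) : ℕ∞ :=
  sInf ((↑) '' {n : ℕ | Gfun Γ n x ≠ ⊤})

/-- For `x` of infinite rank, the set `𝒜` with `𝒢(x) = ∞(𝒜)`:
the set of finite Sprague-Grundy values of finite-rank options of `x`. -/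
def ValSet {V : Type*} (Γ : V → Finset V) (x : V) : Set ℕ :=
  {a | ∃ y ∈ Γ x, HasGVal Γ y a}

/-- The graph of the disjunctive sum: move in exactly one coordinate. -/
noncomputable def sumGraph {V W : Type*} (Γ : V → Finset V) (Δ : W → Finset W) :
    V × W → Finset (V × W) := fun p =>
  (Γ p.1).image (fun u => (u, p.2)) ∪ (Δ p.2).image (fun w => (p.1, w))

/-- Two (positions of possibly different) games lie in the same outcome class. -/
def SameOutcome {V W : Type*} (Γ : V → Finset V) (x : V) (Δ : W → Finset W) (y : W) : Prop :=
  (x ∈ PPos Γ ↔ y ∈ PPos Δ) ∧ (x ∈ NPos Γ ↔ y ∈ NPos Δ) ∧ (x ∈ DPos Γ ↔ y ∈ DPos Δ)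

/-- Equivalence of games: `G + X` and `H + X` have the same outcome for every
locally finite game `X`. -/
def GameEquiv {V W : Type*} (Γ : V → Finset V) (x : V) (Δ : W → Finset W) (y : W) : Prop :=
  ∀ (X : Type u) (Ξ : X → Finset X) (z : X),
    SameOutcome (sumGraph Γ Ξ) (x, z) (sumGraph Δ Ξ) (y, z)

/-- The nim heap `*m`: positions `0, …, m`, where from `k` one can move to any `j < k`. -/
def nimGraph (m : ℕ) : Fin (m + 1) → Finset (Fin (m + 1)) :=
  fun k => Finset.univ.filter (fun j => j < k)

/-- The reduced graph `R(V)`: the induced graph on the complement of the P-positions. -/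
noncomputable def reducedGraph {V : Type*} (Γ : V → Finset V) :
    {x : V // x ∉ PPos Γ} → Finset {x : V // x ∉ PPos Γ} := fun x =>
  (Γ x.1).subtype (fun y => y ∉ PPos Γ)

/-- The vertex set of `R^{(k)}(V)`: positions which do not have finite rank with
Sprague-Grundy value `< k`. -/
def RkSet {V : Type*} (Γ : V → Finset V) (k : ℕ) : Set V :=
  {x | ¬ ∃ m < k, HasGVal Γ x m}

/-- The induced game graph `R^{(k)}(V)` on `RkSet Γ k`. -/
noncomputable def RkGraph {V : Type*} (Γ : V → Finset V) (k : ℕ) :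
    RkSet Γ k → Finset (RkSet Γ k) := fun x =>
  (Γ x.1).subtype (fun y => y ∈ RkSet Γ k)

/-- `V` is `k`-stable: every infinite-rank position `x`, with `𝒢(x) = ∞(𝒜)`,
has `{0, 1, …, k} ⊆ 𝒜`. -/
def kStable {V : Type*} (Γ : V → Finset V) (k : ℕ) : Prop :=
  ∀ x, InfiniteRank Γ x → ∀ j ≤ k, j ∈ ValSet Γ x

/-- `l` is a directed walk from `o` to `x` in the graph `Γ`. -/
def IsWalk {V : Type*} (Γ : V → Finset V) (o x : V) (l : List V) : Prop :=
  l.head? = some o ∧ l.getLast? = some x ∧ l.Chain' (fun a b => b ∈ Γ a)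

/-- `Γ` is a tree with root `o`: `o` has no incoming arcs, and every vertex is
reached from `o` by a unique directed walk. -/
def IsTree {V : Type*} (Γ : V → Finset V) (o : V) : Prop :=
  (∀ x, o ∉ Γ x) ∧ ∀ x, ∃! l : List V, IsWalk Γ o x l

/-- `f` is a mex labelling: `f x` is the least natural number not attained by `f`
on the options of `x`, for every `x`. -/
def MexLabelling {V : Type*} (Γ : V → Finset V) (f : V → ℕ) : Prop :=
  ∀ x, f x = sInf {n : ℕ | ∀ y ∈ Γ x, f y ≠ n}
section AuxMex

variable {V : Type*}

lemma mexF_set_nonempty (s : Finset V) (g : V → ℕ∞) :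
    {n : ℕ | ∀ y ∈ s, g y ≠ (n : ℕ∞)}.Nonempty := by
  refine ⟨(s.sup fun y => (g y).toNat) + 1, fun y hy hgy => ?_⟩
  have h1 : (g y).toNat = (s.sup fun y => (g y).toNat) + 1 := by
    rw [hgy]; exact_mod_cast ENat.toNat_coe _
  have h2 : (g y).toNat ≤ s.sup fun y => (g y).toNat :=
    Finset.le_sup (f := fun y => (g y).toNat) hy
  omega

lemma mexF_notMem (s : Finset V) (g : V → ℕ∞) :
    ∀ y ∈ s, g y ≠ (mexF s g : ℕ∞) :=
  Nat.sInf_mem (mexF_set_nonempty s g)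

lemma mexF_le {s : Finset V} {g : V → ℕ∞} {a : ℕ} (h : ∀ y ∈ s, g y ≠ (a : ℕ∞)) :
    mexF s g ≤ a :=
  Nat.sInf_le h

lemma exists_of_lt_mexF {s : Finset V} {g : V → ℕ∞} {a : ℕ} (h : a < mexF s g) :
    ∃ y ∈ s, g y = (a : ℕ∞) := by
  by_contra hc
  push_neg at hc
  exact absurd (mexF_le hc) (not_le.2 h)

lemma Gfun_zero (Γ : V → Finset V) (x : V) :
    Gfun Γ 0 x = if Γ x = ∅ then 0 else ⊤ := rfl

lemma Gfun_succ (Γ : V → Finset V) (n : ℕ) (x : V) :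
    Gfun Γ (n+1) x =
      if ∀ y ∈ Γ x, Gfun Γ n y ≤ (mexF (Γ x) (Gfun Γ n) : ℕ∞) ∨
          ∃ z ∈ Γ y, Gfun Γ n z = (mexF (Γ x) (Gfun Γ n) : ℕ∞)
      then (mexF (Γ x) (Gfun Γ n) : ℕ∞) else ⊤ := rfl

lemma gfun_succ_eq_mex {Γ : V → Finset V} {n : ℕ} {x : V} {v : ℕ}
    (h : Gfun Γ (n+1) x = (v : ℕ∞)) :
    mexF (Γ x) (Gfun Γ n) = v ∧
      ∀ y ∈ Γ x, Gfun Γ n y ≤ (v : ℕ∞) ∨ ∃ z ∈ Γ y, Gfun Γ n z = (v : ℕ∞) := by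
  rw [Gfun_succ] at h
  split_ifs at h with hc
  · have hv : mexF (Γ x) (Gfun Γ n) = v := Nat.cast_inj.mp h
    exact ⟨hv, hv ▸ hc⟩
  · exact absurd h.symm (WithTop.natCast_ne_top v)

end AuxMex
section AuxStab

variable {V : Type*}

lemma Gfun_succ_eq_of_ne_top (Γ : V → Finset V) :
    ∀ n x, Gfun Γ n x ≠ ⊤ → Gfun Γ (n+1) x = Gfun Γ n x := by
  intro n
  induction n with
  | zero =>
      intro x hx
      rw [Gfun_zero] at hx
      by_cases h : Γ x = ∅
      · have hmex : mexF (Γ x) (Gfun Γ 0) = 0 :=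
          Nat.eq_zero_of_le_zero (mexF_le (by rw [h]; simp))
        rw [Gfun_succ, if_pos (by rw [h]; simp), hmex, Gfun_zero, if_pos h]
        rfl
      · rw [if_neg h] at hx; exact absurd rfl hx
  | succ n ih =>
      intro x hx
      obtain ⟨m, hm⟩ : ∃ m : ℕ, Gfun Γ (n+1) x = (m : ℕ∞) := by
        obtain ⟨m, hm⟩ := WithTop.ne_top_iff_exists.mp hx
        exact ⟨m, hm.symm⟩
      obtain ⟨hmex, hC⟩ := gfun_succ_eq_mex hm
      rw [hm]
      have key1 : ∀ y ∈ Γ x, Gfun Γ (n+1) y ≠ (m : ℕ∞) := by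
        intro y hy heq
        by_cases htop : Gfun Γ n y = ⊤
        · rcases hC y hy with hle | ⟨z, hz, hzval⟩
          · rw [htop] at hle; simp at hle
          · rw [Gfun_succ] at heq
            split_ifs at heq with hcond
            · have : mexF (Γ y) (Gfun Γ n) = m := Nat.cast_inj.mp heq
              exact mexF_notMem _ _ z hz (this ▸ hzval)
            · exact absurd heq.symm (WithTop.natCast_ne_top m)
        · rw [ih y htop] at heq
          exact mexF_notMem _ _ y hy (hmex ▸ heq)
      have hm' : mexF (Γ x) (Gfun Γ (n+1)) = m := by
        refine le_antisymm (mexF_le key1) ?_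
        by_contra hlt
        push_neg at hlt
        obtain ⟨y, hy, hyval⟩ := exists_of_lt_mexF (hmex ▸ hlt)
        have : Gfun Γ (n+1) y = ((mexF (Γ x) (Gfun Γ (n+1)) : ℕ) : ℕ∞) := by
          rw [ih y (by rw [hyval]; exact WithTop.natCast_ne_top _)]; exact hyval
        exact mexF_notMem _ _ y hy this
      have key2 : ∀ y ∈ Γ x, Gfun Γ (n+1) y ≤ (m : ℕ∞) ∨
          ∃ z ∈ Γ y, Gfun Γ (n+1) z = (m : ℕ∞) := by
        intro y hy
        rcases hC y hy with hle | ⟨z, hz, hzval⟩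
        · left
          rw [ih y (by intro ht; rw [ht] at hle; simp at hle)]
          exact hle
        · right
          exact ⟨z, hz, by
            rw [ih z (by rw [hzval]; exact WithTop.natCast_ne_top _)]; exact hzval⟩
      rw [Gfun_succ, hm', if_pos key2]

lemma Gfun_stab {Γ : V → Finset V} {n : ℕ} {x : V} {v : ℕ}
    (h : Gfun Γ n x = (v : ℕ∞)) : ∀ m, n ≤ m → Gfun Γ m x = (v : ℕ∞) := by
  intro m hm
  induction m, hm using Nat.le_induction with
  | base => exact h
  | succ m hm ih =>
      rw [Gfun_succ_eq_of_ne_top Γ m x (by rw [ih]; exact WithTop.natCast_ne_top _)]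
      exact ih

lemma hasGVal_iff {Γ : V → Finset V} {x : V} {v : ℕ} :
    HasGVal Γ x v ↔ ∃ n, Gfun Γ n x = (v : ℕ∞) := by
  constructor
  · rintro ⟨n₀, h⟩; exact ⟨n₀, h n₀ le_rfl⟩
  · rintro ⟨n, h⟩; exact ⟨n, Gfun_stab h⟩

lemma hasGVal_unique {Γ : V → Finset V} {x : V} {v w : ℕ}
    (h1 : HasGVal Γ x v) (h2 : HasGVal Γ x w) : v = w := by
  obtain ⟨n1, h1⟩ := h1
  obtain ⟨n2, h2⟩ := h2
  have e1 := h1 (max n1 n2) (le_max_left _ _)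
  have e2 := h2 (max n1 n2) (le_max_right _ _)
  exact Nat.cast_inj.mp (e1.symm.trans e2)

lemma finite_or_infinite_rank (Γ : V → Finset V) (x : V) :
    (∃ v, HasGVal Γ x v) ∨ InfiniteRank Γ x := by
  by_cases h : InfiniteRank Γ x
  · exact Or.inr h
  · left
    unfold InfiniteRank at h
    push_neg at h
    obtain ⟨n, hn⟩ := h
    obtain ⟨v, hv⟩ := WithTop.ne_top_iff_exists.mp hn
    exact ⟨v, hasGVal_iff.mpr ⟨n, hv.symm⟩⟩

lemma not_hasGVal_of_infiniteRank {Γ : V → Finset V} {x : V}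
    (h : InfiniteRank Γ x) (v : ℕ) : ¬ HasGVal Γ x v := by
  rintro ⟨n₀, hn⟩
  have := hn n₀ le_rfl
  rw [h n₀] at this
  exact WithTop.natCast_ne_top v this.symm

end AuxStab
section AuxGraph

variable {W : Type*}

lemma mem_posP_zero {Δ : W → Finset W} {x : W} : x ∈ PosP Δ 0 ↔ Δ x = ∅ := Iff.rfl

lemma mem_posP_succ {Δ : W → Finset W} {x : W} {n : ℕ} :
    x ∈ PosP Δ (n+1) ↔ ∀ y ∈ Δ x, ∃ z ∈ Δ y, z ∈ PosP Δ n := Iff.rfl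

lemma mem_posN_succ {Δ : W → Finset W} {x : W} {n : ℕ} :
    x ∈ PosN Δ (n+1) ↔ ∃ y ∈ Δ x, y ∈ PosP Δ n := Iff.rfl

lemma posP_posN_disj (Δ : W → Finset W) :
    ∀ s n m (x : W), n + m ≤ s → x ∈ PosP Δ n → x ∈ PosN Δ m → False := by
  intro s
  induction s with
  | zero =>
      intro n m x hs hP hN
      match m, hN with
      | 0, hN => exact hN
      | (m+1), hN => omega
  | succ s ih =>
      intro n m x hs hP hN
      match m, hN with
      | 0, hN => exact hN
      | (m+1), hN =>
        obtain ⟨y, hyx, hyP⟩ := hN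
        match n, hP with
        | 0, hP =>
            rw [mem_posP_zero] at hP
            rw [hP] at hyx
            exact Finset.notMem_empty y hyx
        | (n+1), hP =>
            obtain ⟨z, hzy, hzP⟩ := hP y hyx
            exact ih m (n+1) y (by omega) hyP ⟨z, hzy, hzP⟩

lemma mem_PPos_iff {Δ : W → Finset W} {x : W} : x ∈ PPos Δ ↔ ∃ n, x ∈ PosP Δ n :=
  Set.mem_iUnion

lemma mem_NPos_iff {Δ : W → Finset W} {x : W} : x ∈ NPos Δ ↔ ∃ n, x ∈ PosN Δ n :=
  Set.mem_iUnion

lemma PPos_NPos_disj {Δ : W → Finset W} {x : W} (hP : x ∈ PPos Δ) (hN : x ∈ NPos Δ) :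
    False := by
  obtain ⟨n, hn⟩ := mem_PPos_iff.mp hP
  obtain ⟨m, hm⟩ := mem_NPos_iff.mp hN
  exact posP_posN_disj Δ (n+m) n m x le_rfl hn hm

lemma mem_DPos_iff {Δ : W → Finset W} {x : W} :
    x ∈ DPos Δ ↔ x ∉ PPos Δ ∧ x ∉ NPos Δ := by
  rw [DPos, Set.mem_compl_iff, Set.mem_union]
  tauto

end AuxGraph

section AuxRk

variable {V : Type*}

lemma rkSet_of_hasGVal {Γ : V → Finset V} {x : V} {j : ℕ} (h : HasGVal Γ x j) :
    x ∈ RkSet Γ j := by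
  rintro ⟨m, hm, hval⟩
  rw [hasGVal_unique hval h] at hm
  exact lt_irrefl j hm

lemma rkSet_of_infiniteRank {Γ : V → Finset V} {x : V} (h : InfiniteRank Γ x) (j : ℕ) :
    x ∈ RkSet Γ j := by
  rintro ⟨m, hm, hval⟩
  exact not_hasGVal_of_infiniteRank h m hval

lemma rkSet_mono {Γ : V → Finset V} {i j : ℕ} (h : i ≤ j) : RkSet Γ j ⊆ RkSet Γ i := by
  intro x hx ⟨m, hm, hval⟩
  exact hx ⟨m, lt_of_lt_of_le hm h, hval⟩

lemma mem_rkGraph {Γ : V → Finset V} {j : ℕ} {x y : RkSet Γ j} :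
    y ∈ RkGraph Γ j x ↔ (y : V) ∈ Γ (x : V) :=
  Finset.mem_subtype

end AuxRk
section AuxA

variable {V : Type*}

lemma lemA (Γ : V → Finset V) (j : ℕ) :
    ∀ n x (_ : Gfun Γ n x = (j : ℕ∞)) (hx : x ∈ RkSet Γ j),
      (⟨x, hx⟩ : RkSet Γ j) ∈ PosP (RkGraph Γ j) n := by
  intro n
  induction n with
  | zero =>
      intro x h hx
      rw [Gfun_zero] at h
      split_ifs at h with hempty
      · show RkGraph Γ j ⟨x, hx⟩ = ∅
        rw [Finset.eq_empty_iff_forall_notMem]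
        intro y hy
        rw [mem_rkGraph, hempty] at hy
        exact Finset.notMem_empty _ hy
      · exact absurd h.symm (WithTop.natCast_ne_top j)
  | succ n ih =>
      intro x h hx
      obtain ⟨hmex, hC⟩ := gfun_succ_eq_mex h
      rw [mem_posP_succ]
      intro y hy
      rw [mem_rkGraph] at hy
      rcases hC (y : V) hy with hle | ⟨z, hz, hzval⟩
      · exfalso
        have hne : Gfun Γ n (y : V) ≠ (j : ℕ∞) := by
          have := mexF_notMem (Γ x) (Gfun Γ n) _ hy
          rwa [hmex] at this
        have hnetop : Gfun Γ n (y : V) ≠ ⊤ := fun ht => by rw [ht] at hle; simp at hle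
        obtain ⟨v, hv⟩ := WithTop.ne_top_iff_exists.mp hnetop
        have hvj : v < j := by
          rw [← hv] at hle hne
          exact lt_of_le_of_ne (Nat.cast_le.mp hle) (fun e => hne (by rw [e]; rfl))
        exact y.2 ⟨v, hvj, hasGVal_iff.mpr ⟨n, hv.symm⟩⟩
      · have hzval' : HasGVal Γ z j := hasGVal_iff.mpr ⟨n, hzval⟩
        have hzR : z ∈ RkSet Γ j := rkSet_of_hasGVal hzval'
        exact ⟨⟨z, hzR⟩, mem_rkGraph.mpr hz, ih z hzval hzR⟩

lemma lemA' {Γ : V → Finset V} {j : ℕ} {x : V} (h : HasGVal Γ x j) (hx : x ∈ RkSet Γ j) :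
    (⟨x, hx⟩ : RkSet Γ j) ∈ PPos (RkGraph Γ j) := by
  obtain ⟨n, hn⟩ := hasGVal_iff.mp h
  exact mem_PPos_iff.mpr ⟨n, lemA Γ j n x hn hx⟩

lemma lemN {Γ : V → Finset V} {j : ℕ} {x : V} (hx : x ∈ RkSet Γ j)
    (h : ∃ y ∈ Γ x, HasGVal Γ y j) :
    (⟨x, hx⟩ : RkSet Γ j) ∈ NPos (RkGraph Γ j) := by
  obtain ⟨y, hy, hyval⟩ := h
  obtain ⟨n, hn⟩ := hasGVal_iff.mp hyval
  have hyR : y ∈ RkSet Γ j := rkSet_of_hasGVal hyval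
  refine mem_NPos_iff.mpr ⟨n + 1, mem_posN_succ.mpr ⟨⟨y, hyR⟩, mem_rkGraph.mpr hy, ?_⟩⟩
  exact lemA Γ j n y hn hyR

end AuxA
section AuxB

variable {V : Type*}

lemma lemBcore (Γ : V → Finset V) (j : ℕ)
    (Hlow : ∀ i < j, DPos (RkGraph Γ i) = ∅)
    (HlowB : ∀ i < j, ∀ n (x : V) (hx : x ∈ RkSet Γ i),
      (⟨x, hx⟩ : RkSet Γ i) ∈ PosP (RkGraph Γ i) n → HasGVal Γ x i)
    (x : V) (hx : x ∈ RkSet Γ j)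
    (hopt : ∀ y ∈ Γ x, y ∈ RkSet Γ j → ∃ z ∈ Γ y, z ∈ RkSet Γ j ∧ HasGVal Γ z j) :
    HasGVal Γ x j := by
  have step1 : ∀ y ∈ Γ x, ¬ HasGVal Γ y j := by
    intro y hy hval
    have hyR : y ∈ RkSet Γ j := rkSet_of_hasGVal hval
    obtain ⟨z, hz, hzR, hzval⟩ := hopt y hy hyR
    exact PPos_NPos_disj (lemA' hval hyR) (lemN hyR ⟨z, hz, hzval⟩)
  have step2 : ∀ a < j, ∃ y ∈ Γ x, HasGVal Γ y a := by
    intro a ha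
    by_contra hno
    push_neg at hno
    have hxa : x ∈ RkSet Γ a := rkSet_mono (le_of_lt ha) hx
    have hnP : (⟨x, hxa⟩ : RkSet Γ a) ∉ PPos (RkGraph Γ a) := by
      intro hP
      obtain ⟨n, hn⟩ := mem_PPos_iff.mp hP
      exact hx ⟨a, ha, HlowB a ha n x hxa hn⟩
    have hnN : (⟨x, hxa⟩ : RkSet Γ a) ∉ NPos (RkGraph Γ a) := by
      intro hN
      obtain ⟨m, hm⟩ := mem_NPos_iff.mp hN
      match m, hm with
      | 0, hm => exact hm
      | (m+1), hm =>
        obtain ⟨y, hy, hyP⟩ := hm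
        exact hno (y : V) (mem_rkGraph.mp hy) (HlowB a ha m (y : V) y.2 hyP)
    have hD : (⟨x, hxa⟩ : RkSet Γ a) ∈ DPos (RkGraph Γ a) := mem_DPos_iff.mpr ⟨hnP, hnN⟩
    rw [Hlow a ha] at hD
    exact hD
  have heventual : ∀ (w : V) (v : ℕ), HasGVal Γ w v →
      ∀ᶠ N in Filter.atTop, Gfun Γ N w = (v : ℕ∞) := by
    rintro w v ⟨n₀, h⟩
    exact Filter.eventually_atTop.mpr ⟨n₀, h⟩
  have e1 : ∀ᶠ N in Filter.atTop, ∀ y ∈ Γ x, Gfun Γ N y ≠ (j : ℕ∞) := by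
    rw [Filter.eventually_all_finset]
    intro y hy
    rcases finite_or_infinite_rank Γ y with ⟨v, hv⟩ | hinf
    · have hvj : v ≠ j := fun e => step1 y hy (e ▸ hv)
      exact (heventual y v hv).mono
        (fun N hN => by rw [hN]; exact fun e => hvj (Nat.cast_inj.mp e))
    · exact Filter.Eventually.of_forall
        (fun N => by rw [hinf N]; exact fun e => WithTop.natCast_ne_top j e.symm)
  have e2 : ∀ᶠ N in Filter.atTop, ∀ a ∈ Finset.range j, ∃ y ∈ Γ x, Gfun Γ N y = (a : ℕ∞) := by
    rw [Filter.eventually_all_finset]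
    intro a ha
    obtain ⟨y, hy, hyval⟩ := step2 a (Finset.mem_range.mp ha)
    exact (heventual y a hyval).mono (fun N hN => ⟨y, hy, hN⟩)
  have e3 : ∀ᶠ N in Filter.atTop, ∀ y ∈ Γ x,
      Gfun Γ N y ≤ (j : ℕ∞) ∨ ∃ z ∈ Γ y, Gfun Γ N z = (j : ℕ∞) := by
    rw [Filter.eventually_all_finset]
    intro y hy
    rcases finite_or_infinite_rank Γ y with ⟨v, hv⟩ | hinf
    · rcases le_or_gt v j with hvle | hvlt
      · exact (heventual y v hv).mono
          (fun N hN => Or.inl (by rw [hN]; exact_mod_cast hvle))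
      · obtain ⟨n₀, h₀⟩ := hv
        have hsucc : Gfun Γ (n₀+1) y = (v : ℕ∞) := h₀ (n₀+1) (Nat.le_succ n₀)
        obtain ⟨hmexy, _⟩ := gfun_succ_eq_mex hsucc
        obtain ⟨z, hz, hzval⟩ := exists_of_lt_mexF (a := j) (by rw [hmexy]; exact hvlt)
        have hzj : HasGVal Γ z j := hasGVal_iff.mpr ⟨n₀, hzval⟩
        exact (heventual z j hzj).mono (fun N hN => Or.inr ⟨z, hz, hN⟩)
    · obtain ⟨z, hz, _, hzval⟩ := hopt y hy (rkSet_of_infiniteRank hinf j)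
      exact (heventual z j hzval).mono (fun N hN => Or.inr ⟨z, hz, hN⟩)
  obtain ⟨N, ⟨h1, h2⟩, h3⟩ := ((e1.and e2).and e3).exists
  have hm : mexF (Γ x) (Gfun Γ N) = j := by
    refine le_antisymm (mexF_le h1) ?_
    by_contra hlt
    push_neg at hlt
    obtain ⟨y, hy, hyval⟩ := h2 (mexF (Γ x) (Gfun Γ N)) (Finset.mem_range.mpr hlt)
    exact mexF_notMem _ _ y hy hyval
  have hfin : Gfun Γ (N+1) x = (j : ℕ∞) := by
    rw [Gfun_succ, hm, if_pos h3]
  exact hasGVal_iff.mpr ⟨N+1, hfin⟩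

lemma lemB (Γ : V → Finset V) :
    ∀ j, (∀ i < j, DPos (RkGraph Γ i) = ∅) →
      ∀ n (x : V) (hx : x ∈ RkSet Γ j),
        (⟨x, hx⟩ : RkSet Γ j) ∈ PosP (RkGraph Γ j) n → HasGVal Γ x j := by
  intro j
  induction j using Nat.strong_induction_on with
  | _ j IHj =>
    intro Hlow
    have HlowB : ∀ i < j, ∀ n (x : V) (hx : x ∈ RkSet Γ i),
        (⟨x, hx⟩ : RkSet Γ i) ∈ PosP (RkGraph Γ i) n → HasGVal Γ x i :=
      fun i hi => IHj i hi (fun i' hi' => Hlow i' (hi'.trans hi))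
    intro n
    induction n with
    | zero =>
        intro x hx hP
        refine lemBcore Γ j Hlow HlowB x hx ?_
        intro y hy hyR
        exfalso
        rw [mem_posP_zero] at hP
        have hmem : (⟨y, hyR⟩ : RkSet Γ j) ∈ RkGraph Γ j ⟨x, hx⟩ := mem_rkGraph.mpr hy
        rw [hP] at hmem
        exact Finset.notMem_empty _ hmem
    | succ n IHn =>
        intro x hx hP
        refine lemBcore Γ j Hlow HlowB x hx ?_
        intro y hy hyR
        obtain ⟨z, hz, hzP⟩ := (mem_posP_succ.mp hP) ⟨y, hyR⟩ (mem_rkGraph.mpr hy)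
        exact ⟨(z : V), mem_rkGraph.mp hz, z.2, IHn (z : V) z.2 hzP⟩

end AuxB

/-- for `k ≥ 1`: (a) if `V, R(V), …, R^{(k)}(V)` are all
draw-free then `R^{(k+1)}(V) = R(R^{(k)}(V))` (as induced subgraphs of `V`,
i.e. their vertex sets agree); (b) `V` is `k`-stable iff
`V, R(V), …, R^{(k)}(V)` are all draw-free. -/
theorem stmt11 {V : Type*} (Γ : V → Finset V) (k : ℕ) (hk : 1 ≤ k) :
    ((∀ j ≤ k, DPos (RkGraph Γ j) = ∅) →
      ∀ x : V, x ∈ RkSet Γ (k + 1) ↔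
        ∃ h : x ∈ RkSet Γ k, (⟨x, h⟩ : RkSet Γ k) ∉ PPos (RkGraph Γ k)) ∧
    (kStable Γ k ↔ ∀ j ≤ k, DPos (RkGraph Γ j) = ∅) := by
  constructor
  · intro H x
    have Hlow : ∀ i < k, DPos (RkGraph Γ i) = ∅ := fun i hi => H i (le_of_lt hi)
    constructor
    · intro hx1
      have hxk : x ∈ RkSet Γ k := rkSet_mono (Nat.le_succ k) hx1
      refine ⟨hxk, ?_⟩
      intro hP
      obtain ⟨n, hn⟩ := mem_PPos_iff.mp hP
      exact hx1 ⟨k, Nat.lt_succ_self k, lemB Γ k Hlow n x hxk hn⟩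
    · rintro ⟨h, hnP⟩ ⟨m, hm, hval⟩
      rcases Nat.lt_succ_iff_lt_or_eq.mp hm with hmk | rfl
      · exact h ⟨m, hmk, hval⟩
      · exact hnP (lemA' hval h)
  · constructor
    · intro hst j hj
      rw [Set.eq_empty_iff_forall_notMem]
      rintro ⟨x, hx⟩ hD
      rw [mem_DPos_iff] at hD
      rcases finite_or_infinite_rank Γ x with ⟨v, hv⟩ | hinf
      · have hvj : j ≤ v := by
          by_contra hlt
          push_neg at hlt
          exact hx ⟨v, hlt, hv⟩
        rcases eq_or_lt_of_le hvj with rfl | hlt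
        · exact hD.1 (lemA' hv hx)
        · obtain ⟨n₀, h₀⟩ := hv
          obtain ⟨hmex, _⟩ := gfun_succ_eq_mex (h₀ (n₀+1) (Nat.le_succ _))
          obtain ⟨z, hz, hzval⟩ := exists_of_lt_mexF (a := j) (by rw [hmex]; exact hlt)
          exact hD.2 (lemN hx ⟨z, hz, hasGVal_iff.mpr ⟨n₀, hzval⟩⟩)
      · obtain ⟨y, hy, hyval⟩ := hst x hinf j hj
        exact hD.2 (lemN hx ⟨y, hy, hyval⟩)
    · intro H x hinf j hj
      have Hlow : ∀ i < j, DPos (RkGraph Γ i) = ∅ :=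
        fun i hi => H i (le_of_lt (lt_of_lt_of_le hi hj))
      have hxj : x ∈ RkSet Γ j := rkSet_of_infiniteRank hinf j
      by_cases hP : (⟨x, hxj⟩ : RkSet Γ j) ∈ PPos (RkGraph Γ j)
      · exfalso
        obtain ⟨n, hn⟩ := mem_PPos_iff.mp hP
        exact not_hasGVal_of_infiniteRank hinf j (lemB Γ j Hlow n x hxj hn)
      · have hN : (⟨x, hxj⟩ : RkSet Γ j) ∈ NPos (RkGraph Γ j) := by
          by_contra hNn
          have hD : (⟨x, hxj⟩ : RkSet Γ j) ∈ DPos (RkGraph Γ j) :=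
            mem_DPos_iff.mpr ⟨hP, hNn⟩
          rw [H j hj] at hD
          exact hD
        obtain ⟨m, hm⟩ := mem_NPos_iff.mp hN
        match m, hm with
        | 0, hm => exact hm.elim
        | (m+1), hm =>
          obtain ⟨y, hy, hyP⟩ := hm
          exact ⟨(y : V), mem_rkGraph.mp hy, lemB Γ j Hlow m (y : V) y.2 hyP⟩
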